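/- arXiv:2403.10485 — 2 statements merged into one kernel-verified Lean document; each statement's English description precedes it below -/
import Mathlib

section
/- Let {f_η}_{η ∈ S_λ} and {g_η}_{η ∈ S_λ} both be KZ families (indexed by the rearrangements of the same partition λ). Suppose there is a rational function h in x₁,…,xₙ over ℚ(t) that is symmetric in x₁,…,xₙ such that g_λ = h·f_λ (where λ itself is regarded as the element of S_λ with weakly decreasing entries). Then g_η = h·f_η for every η ∈ S_λ. -/
open MvPolynomial

set_option maxHeartbeats 1000000
set_option synthInstance.maxHeartbeats 400000
set_option maxRecDepth 10000

noncomputable section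

/-- The field `ℚ(t)` of rational functions in `t`. -/
abbrev Kt : Type := RatFunc ℚ

/-- The element `t` of `ℚ(t)`. -/
def tK : Kt := RatFunc.X

/-- The polynomial ring `ℚ(t)[x₁,…,xₙ]`. -/
abbrev Rt (n : ℕ) : Type := MvPolynomial (Fin n) Kt

/-- The field of rational functions in `x₁,…,xₙ` over `ℚ(t)`. -/
abbrev Ft (n : ℕ) : Type := FractionRing (Rt n)

/-- The canonical embedding of polynomials into rational functions. -/
def toF (n : ℕ) : Rt n →+* Ft n := algebraMap (Rt n) (Ft n)

/-- The variable `x_i` (1-based: `x_i` is the variable of index `i-1`). -/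
def xF (n : ℕ) (i : Fin n) : Ft n := toF n (X i)

/-- The scalar `t` as a rational function. -/
def tF (n : ℕ) : Ft n := toF n (C tK)

/-- The transposition of the (1-based) variables `x_i` and `x_{i+1}`. -/
def swapPerm (n i : ℕ) : Equiv.Perm (Fin n) :=
  if h : 1 ≤ i ∧ i < n then Equiv.swap ⟨i - 1, by omega⟩ ⟨i, h.2⟩ else Equiv.refl _

/-- A permutation of the variables `x₁,…,xₙ`, as a field automorphism of the field
of rational functions. -/
def permF (n : ℕ) (σ : Equiv.Perm (Fin n)) : Ft n ≃+* Ft n :=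
  IsFractionRing.ringEquivOfRingEquiv (renameEquiv Kt σ).toRingEquiv

/-- The operator `s_i`, interchanging the variables `x_i` and `x_{i+1}`. -/
def sOp (n i : ℕ) : Ft n ≃+* Ft n := permF n (swapPerm n i)

/-- The operator `L_i f = ((t·x_i − x_{i+1})/(x_i − x_{i+1}))·(f − s_i f)`
(for `1 ≤ i ≤ n−1`). -/
def LOp (n i : ℕ) (f : Ft n) : Ft n :=
  if h : 1 ≤ i ∧ i < n then
    ((tF n * xF n ⟨i - 1, by omega⟩ - xF n ⟨i, h.2⟩) /
        (xF n ⟨i - 1, by omega⟩ - xF n ⟨i, h.2⟩)) * (f - sOp n i f)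
  else 0

/-- The Demazure–Lusztig operator `T_i f = t·f − L_i f`. -/
def TOp (n i : ℕ) (f : Ft n) : Ft n := tF n * f - LOp n i f

/-- The set `S_λ` of compositions obtained by permuting the parts of `lam`. -/
def SLam (n : ℕ) (lam : Fin n → ℕ) : Finset (Fin n → ℕ) :=
  Finset.image (fun σ : Equiv.Perm (Fin n) => lam ∘ σ) Finset.univ

/-- The cyclic shift `(η₁,…,ηₙ) ↦ (ηₙ,η₁,…,η_{n−1})` of a composition. -/
def cycComp (n : ℕ) [NeZero n] (η : Fin n → ℕ) : Fin n → ℕ := fun j => η (j - 1)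

/-- The composition `η` with its entries at the (1-based) positions `i` and `i+1`
interchanged. -/
def sEta (n i : ℕ) (η : Fin n → ℕ) : Fin n → ℕ := η ∘ (swapPerm n i)

/-- The KZ relations (the qKZ relations at `q = 1`) for a family `{f_η}_{η ∈ S_ν}`
of polynomials in `x₁,…,xₙ` with coefficients in `ℚ(t)`:
`T_i f_η = f_{s_i η}` when `η_i > η_{i+1}`, `T_i f_η = t·f_η` when
`η_i = η_{i+1}`, and `f_η(x₁,…,xₙ) = f_{(ηₙ,η₁,…,η_{n−1})}(xₙ,x₁,…,x_{n−1})`. -/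
def KZRel (n : ℕ) [NeZero n] (nu : Fin n → ℕ) (f : (Fin n → ℕ) → Rt n) : Prop :=
  (∀ η ∈ SLam n nu, ∀ (i : ℕ) (_ : 1 ≤ i) (hin : i < n),
    η ⟨i, hin⟩ < η ⟨i - 1, by omega⟩ →
      TOp n i (toF n (f η)) = toF n (f (sEta n i η))) ∧
  (∀ η ∈ SLam n nu, ∀ (i : ℕ) (_ : 1 ≤ i) (hin : i < n),
    η ⟨i - 1, by omega⟩ = η ⟨i, hin⟩ →
      TOp n i (toF n (f η)) = tF n * toF n (f η)) ∧
  (∀ η ∈ SLam n nu,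
    f η = rename (fun j : Fin n => j - 1) (f (cycComp n η)))

/-- A KZ family: a family of homogeneous polynomials of degree `|ν|` satisfying the
KZ relations. -/
def IsKZ (n : ℕ) [NeZero n] (nu : Fin n → ℕ) (f : (Fin n → ℕ) → Rt n) : Prop :=
  (∀ η ∈ SLam n nu, (f η).IsHomogeneous (∑ i, nu i)) ∧ KZRel n nu f


/-- Potential function: weighted sum `∑ i, i·η_i`, strictly decreasing under
un-swapping an ascent. -/
def PhiAux (n : ℕ) (η : Fin n → ℕ) : ℕ := ∑ j : Fin n, (j : ℕ) * η j

lemma sEta_mem_SLam_aux (n i : ℕ) (lam η : Fin n → ℕ) (hη : η ∈ SLam n lam) :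
    sEta n i η ∈ SLam n lam := by
  simp only [SLam, Finset.mem_image, Finset.mem_univ, true_and] at hη ⊢
  obtain ⟨σ, hσ⟩ := hη
  refine ⟨(swapPerm n i).trans σ, ?_⟩
  funext j
  simp [← hσ, sEta, Function.comp]

lemma TOp_mul_symm_aux (n i : ℕ) (h f : Ft n) (hh : sOp n i h = h) :
    TOp n i (h * f) = h * TOp n i f := by
  unfold TOp LOp
  split_ifs with hc
  · rw [map_mul, hh]; ring
  · ring

lemma antitone_rearrange_eq_aux {n : ℕ} (lam : Fin n → ℕ) (σ : Equiv.Perm (Fin n))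
    (h1 : ∀ i j : Fin n, i ≤ j → lam j ≤ lam i)
    (h2 : ∀ i j : Fin n, i ≤ j → (lam ∘ σ) j ≤ (lam ∘ σ) i) :
    lam ∘ σ = lam := by
  have hmono1 : Monotone (lam ∘ (Fin.revPerm.trans σ)) := by
    intro a b hab
    exact h2 _ _ (Fin.rev_le_rev.mpr hab)
  have hmono2 : Monotone (lam ∘ (Fin.revPerm : Equiv.Perm (Fin n))) := by
    intro a b hab
    exact h1 _ _ (Fin.rev_le_rev.mpr hab)
  have key := Tuple.unique_monotone hmono1 hmono2
  funext j
  have := congrFun key (Fin.rev j)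
  simpa [Function.comp, Fin.rev_rev] using this

lemma exists_ascent_aux {n : ℕ} (η : Fin n → ℕ)
    (hnot : ¬ ∀ i j : Fin n, i ≤ j → η j ≤ η i) :
    ∃ i : ℕ, ∃ _ : 1 ≤ i, ∃ h2 : i < n, η ⟨i - 1, by omega⟩ < η ⟨i, h2⟩ := by
  by_contra hc
  push_neg at hc
  apply hnot
  have adj : ∀ (k : ℕ) (hk : k + 1 < n), η ⟨k + 1, hk⟩ ≤ η ⟨k, by omega⟩ := by
    intro k hk
    have := hc (k + 1) (by omega) hk
    simpa using this
  have step : ∀ (d k : ℕ) (hk : k + d < n), η ⟨k + d, hk⟩ ≤ η ⟨k, by omega⟩ := by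
    intro d
    induction d with
    | zero => intro k hk; exact le_refl _
    | succ d ih =>
      intro k hk
      have h1 : k + d < n := by omega
      have h2 : (k + d) + 1 < n := by omega
      have ha := adj (k + d) h2
      have hb := ih k h1
      exact le_trans ha hb
  intro i j hij
  have hij' : (i : ℕ) ≤ (j : ℕ) := hij
  have hjn : (j : ℕ) < n := j.isLt
  have := step ((j : ℕ) - (i : ℕ)) (i : ℕ) (by omega)
  have e1 : (⟨(i : ℕ) + ((j : ℕ) - (i : ℕ)), by omega⟩ : Fin n) = j := Fin.ext (by simp only [Fin.val_mk]; omega)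
  have e2 : (⟨(i : ℕ), by omega⟩ : Fin n) = i := Fin.ext rfl
  rwa [e1, e2] at this

lemma swapPerm_eq_aux {n i : ℕ} (h1 : 1 ≤ i) (h2 : i < n) :
    swapPerm n i = Equiv.swap ⟨i - 1, by omega⟩ ⟨i, h2⟩ := by
  rw [swapPerm, dif_pos ⟨h1, h2⟩]

lemma phi_lt_aux {n i : ℕ} (h1 : 1 ≤ i) (h2 : i < n) (η : Fin n → ℕ)
    (hasc : η ⟨i - 1, by omega⟩ < η ⟨i, h2⟩) :
    PhiAux n (sEta n i η) < PhiAux n η := by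
  set a : Fin n := ⟨i - 1, by omega⟩ with ha
  set b : Fin n := ⟨i, h2⟩ with hb
  have hab : a ≠ b := by
    simp only [ha, hb, Fin.mk.injEq, ne_eq]
    omega
  have hsw : swapPerm n i = Equiv.swap a b := swapPerm_eq_aux h1 h2
  have hbmem : b ∈ Finset.univ.erase a := Finset.mem_erase.mpr ⟨hab.symm, Finset.mem_univ _⟩
  unfold PhiAux
  rw [← Finset.add_sum_erase _ _ (Finset.mem_univ a), ← Finset.add_sum_erase _ _ hbmem,
      ← Finset.add_sum_erase _ (fun j : Fin n => (j : ℕ) * η j) (Finset.mem_univ a),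
      ← Finset.add_sum_erase _ (fun j : Fin n => (j : ℕ) * η j) hbmem]
  have e1 : sEta n i η a = η b := by
    simp [sEta, hsw]
  have e2 : sEta n i η b = η a := by
    simp [sEta, hsw]
  have e3 : ∑ j ∈ (Finset.univ.erase a).erase b, (j : ℕ) * sEta n i η j
      = ∑ j ∈ (Finset.univ.erase a).erase b, (j : ℕ) * η j := by
    apply Finset.sum_congr rfl
    intro j hj
    simp only [Finset.mem_erase] at hj
    rw [sEta]
    simp [hsw, Equiv.swap_apply_of_ne_of_ne hj.2.1 hj.1]
  rw [e1, e2, e3]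
  have hbv : (b : ℕ) = (a : ℕ) + 1 := by
    simp only [ha, hb]
    omega
  rw [hbv]
  have hx : η a < η b := hasc
  nlinarith [hx]

lemma sEta_sEta_aux {n i : ℕ} (h1 : 1 ≤ i) (h2 : i < n) (η : Fin n → ℕ) :
    sEta n i (sEta n i η) = η := by
  funext j
  simp [sEta, swapPerm_eq_aux h1 h2, Function.comp, Equiv.swap_apply_self]

/-- Lemma 4.4 of the paper: if `{f_η}` and `{g_η}` are KZ families indexed by the
rearrangements of the same partition `λ`, and the ratio `h = g_λ/f_λ` of the
partition-indexed terms is a symmetric rational function of `x₁,…,xₙ`, then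
`g_η = h·f_η` for every `η ∈ S_λ`. -/
theorem stmt_11 (n : ℕ) [NeZero n] (lam : Fin n → ℕ)
    (hlam : ∀ i j : Fin n, i ≤ j → lam j ≤ lam i)
    (f g : (Fin n → ℕ) → Rt n) (hf : IsKZ n lam f) (hg : IsKZ n lam g)
    (h : Ft n) (hsym : ∀ σ : Equiv.Perm (Fin n), permF n σ h = h)
    (hratio : toF n (g lam) = h * toF n (f lam)) :
    ∀ η ∈ SLam n lam, toF n (g η) = h * toF n (f η) := by
  obtain ⟨-, hf1, -, -⟩ := hf
  obtain ⟨-, hg1, -, -⟩ := hg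
  have key : ∀ N : ℕ, ∀ η ∈ SLam n lam, PhiAux n η ≤ N → toF n (g η) = h * toF n (f η) := by
    intro N
    induction N using Nat.strong_induction_on with
    | _ N ih =>
      intro η hη hΦ
      by_cases hanti : ∀ i j : Fin n, i ≤ j → η j ≤ η i
      · obtain ⟨σ, -, hσ⟩ := Finset.mem_image.mp hη
        subst hσ
        rw [antitone_rearrange_eq_aux lam σ hlam hanti]
        exact hratio
      · obtain ⟨i, hi1, hi2, hasc⟩ := exists_ascent_aux η hanti
        set η' := sEta n i η with hη'
        have hη'mem : η' ∈ SLam n lam := sEta_mem_SLam_aux n i lam η hη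
        have hΦ' : PhiAux n η' < PhiAux n η := phi_lt_aux hi1 hi2 η hasc
        have hsw : swapPerm n i = Equiv.swap ⟨i - 1, by omega⟩ ⟨i, hi2⟩ :=
          swapPerm_eq_aux hi1 hi2
        have hdes : η' ⟨i, hi2⟩ < η' ⟨i - 1, by omega⟩ := by
          have e1 : η' ⟨i - 1, by omega⟩ = η ⟨i, hi2⟩ := by
            simp [hη', sEta, hsw]
          have e2 : η' ⟨i, hi2⟩ = η ⟨i - 1, by omega⟩ := by
            simp [hη', sEta, hsw]
          rw [e1, e2]
          exact hasc
        have hback : sEta n i η' = η := sEta_sEta_aux hi1 hi2 η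
        have ihs := ih (PhiAux n η') (by omega) η' hη'mem le_rfl
        have Tf := hf1 η' hη'mem i hi1 hi2 hdes
        have Tg := hg1 η' hη'mem i hi1 hi2 hdes
        rw [hback] at Tf Tg
        have hsymi : sOp n i h = h := hsym (swapPerm n i)
        calc toF n (g η) = TOp n i (toF n (g η')) := Tg.symm
          _ = TOp n i (h * toF n (f η')) := by rw [ihs]
          _ = h * TOp n i (toF n (f η')) := TOp_mul_symm_aux n i h _ hsymi
          _ = h * toF n (f η) := by rw [Tf]
  intro η hη
  exact key (PhiAux n η) η hη le_rfl


end
end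

section
/- Let φ : ℕ → ℕ be a weakly order-preserving function, and let λ and μ be partitions of length n with φ(λ) = μ. If {f_ζ}_{ζ ∈ S_λ} is a KZ family, then the family {g_η}_{η ∈ S_μ} defined by g_η = Σ_{ζ ∈ S_λ : φ(ζ) = η} f_ζ (where each g_η is a homogeneous polynomial of degree λ₁+⋯+λₙ) satisfies the KZ relations indexed by S_μ: T_i g_η = g_{s_i η} when η_i > η_{i+1}; T_i g_η = t g_η when η_i = η_{i+1}; and g_η(x₁,…,xₙ) = g_{(η_n,η₁,…,η_{n−1})}(xₙ, x₁,…,x_{n−1}). -/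
open MvPolynomial

set_option maxHeartbeats 1000000
set_option synthInstance.maxHeartbeats 400000
set_option maxRecDepth 10000

noncomputable section

lemma permF_toF (n : ℕ) (σ : Equiv.Perm (Fin n)) (p : Rt n) :
    permF n σ (toF n p) = toF n (rename σ p) := by
  simp [permF, toF, IsFractionRing.ringEquivOfRingEquiv_algebraMap]

lemma swapPerm_invol (n i : ℕ) (j : Fin n) : swapPerm n i (swapPerm n i j) = j := by
  unfold swapPerm
  split
  · simp
  · simp
lemma sOp_sOp (n i : ℕ) (f : Ft n) : sOp n i (sOp n i f) = f := by
  have hcomp : ⇑(swapPerm n i) ∘ ⇑(swapPerm n i) = id := funext (swapPerm_invol n i)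
  have key : ((sOp n i : Ft n →+* Ft n).comp (sOp n i : Ft n →+* Ft n)) = RingHom.id (Ft n) := by
    apply IsLocalization.ringHom_ext (nonZeroDivisors (Rt n))
    apply RingHom.ext
    intro p
    show sOp n i (sOp n i (toF n p)) = toF n p
    simp only [sOp, permF_toF, rename_rename, hcomp, rename_id, AlgHom.id_apply]
  exact RingHom.congr_fun key f

lemma sOp_tF (n i : ℕ) : sOp n i (tF n) = tF n := by
  simp [sOp, tF, permF_toF]

lemma sOp_xF (n i : ℕ) (j : Fin n) : sOp n i (xF n j) = xF n (swapPerm n i j) := by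
  simp [sOp, xF, permF_toF]

lemma xF_sub_ne (n i : ℕ) (h1 : 1 ≤ i) (h2 : i < n) :
    xF n ⟨i - 1, by omega⟩ - xF n ⟨i, h2⟩ ≠ 0 := by
  rw [sub_ne_zero]
  intro h
  have hinj : Function.Injective (toF n) :=
    IsFractionRing.injective (Rt n) (Ft n)
  have := hinj h
  have h2' : (⟨i - 1, by omega⟩ : Fin n) = ⟨i, h2⟩ := by
    have := MvPolynomial.X_injective (R := Kt) this
    exact this
  simp only [Fin.mk.injEq] at h2'
  omega

lemma swapPerm_left (n i : ℕ) (h1 : 1 ≤ i) (h2 : i < n) :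
    swapPerm n i ⟨i - 1, by omega⟩ = ⟨i, h2⟩ := by
  simp [swapPerm, h1, h2]

lemma swapPerm_right (n i : ℕ) (h1 : 1 ≤ i) (h2 : i < n) :
    swapPerm n i ⟨i, h2⟩ = ⟨i - 1, by omega⟩ := by
  simp [swapPerm, h1, h2]

lemma TOp_pair (n i : ℕ) (h1 : 1 ≤ i) (h2 : i < n) (u v : Ft n)
    (huv : TOp n i u = v) : TOp n i (u + v) = tF n * (u + v) := by
  have hd : xF n ⟨i - 1, by omega⟩ - xF n ⟨i, h2⟩ ≠ 0 := xF_sub_ne n i h1 h2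
  have hd' : xF n ⟨i, h2⟩ - xF n ⟨i - 1, by omega⟩ ≠ 0 := by
    intro h; apply hd; linear_combination -h
  have hT : ∀ f : Ft n, TOp n i f = tF n * f -
      ((tF n * xF n ⟨i - 1, by omega⟩ - xF n ⟨i, h2⟩) /
        (xF n ⟨i - 1, by omega⟩ - xF n ⟨i, h2⟩)) * (f - sOp n i f) := by
    intro f; simp [TOp, LOp, h1, h2]
  have hv : v = tF n * u -
      ((tF n * xF n ⟨i - 1, by omega⟩ - xF n ⟨i, h2⟩) /
        (xF n ⟨i - 1, by omega⟩ - xF n ⟨i, h2⟩)) * (u - sOp n i u) := by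
    rw [← huv, hT]
  have hsv : sOp n i v = tF n * sOp n i u -
      ((tF n * xF n ⟨i, h2⟩ - xF n ⟨i - 1, by omega⟩) /
        (xF n ⟨i, h2⟩ - xF n ⟨i - 1, by omega⟩)) * (sOp n i u - u) := by
    rw [hv]
    simp only [map_sub, map_mul, map_div₀, sOp_tF, sOp_xF, sOp_sOp,
      swapPerm_left n i h1 h2, swapPerm_right n i h1 h2]
  have hcc : (tF n * xF n ⟨i - 1, by omega⟩ - xF n ⟨i, h2⟩) /
        (xF n ⟨i - 1, by omega⟩ - xF n ⟨i, h2⟩) +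
      (tF n * xF n ⟨i, h2⟩ - xF n ⟨i - 1, by omega⟩) /
        (xF n ⟨i, h2⟩ - xF n ⟨i - 1, by omega⟩) = tF n + 1 := by
    field_simp
    ring
  have hsym : sOp n i (u + v) = u + v := by
    rw [map_add, hsv, hv]
    linear_combination (u - sOp n i u) * hcc
  rw [hT, hsym]
  ring

lemma TOp_add (n i : ℕ) (u v : Ft n) : TOp n i (u + v) = TOp n i u + TOp n i v := by
  unfold TOp LOp
  split
  · rw [map_add]; ring
  · ring

lemma TOp_zero (n i : ℕ) : TOp n i 0 = 0 := by
  unfold TOp LOp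
  split
  · rw [map_zero]; ring
  · ring

lemma TOp_sum (n i : ℕ) {α : Type*} [DecidableEq α] (s : Finset α) (F : α → Ft n) :
    TOp n i (∑ a ∈ s, F a) = ∑ a ∈ s, TOp n i (F a) := by
  induction s using Finset.induction with
  | empty => simpa using TOp_zero n i
  | insert _ _ h ih => rw [Finset.sum_insert h, Finset.sum_insert h, TOp_add, ih]

lemma mem_SLam (n : ℕ) (lam ζ : Fin n → ℕ) :
    ζ ∈ SLam n lam ↔ ∃ σ : Equiv.Perm (Fin n), lam ∘ ⇑σ = ζ := by
  simp [SLam]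

lemma comp_mem_SLam (n : ℕ) (lam ζ : Fin n → ℕ) (τ : Equiv.Perm (Fin n))
    (h : ζ ∈ SLam n lam) : ζ ∘ ⇑τ ∈ SLam n lam := by
  rw [mem_SLam] at h ⊢
  obtain ⟨σ, hσ⟩ := h
  exact ⟨σ * τ, by rw [← hσ]; rfl⟩

lemma sEta_mem_SLam (n i : ℕ) (lam ζ : Fin n → ℕ) (h : ζ ∈ SLam n lam) :
    sEta n i ζ ∈ SLam n lam := comp_mem_SLam n lam ζ _ h

lemma sEta_sEta (n i : ℕ) (ζ : Fin n → ℕ) : sEta n i (sEta n i ζ) = ζ := by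
  funext j
  simp [sEta, swapPerm_invol]

def cycInv (n : ℕ) [NeZero n] (η : Fin n → ℕ) : Fin n → ℕ := fun j => η (j + 1)

lemma cycComp_eq_comp (n : ℕ) [NeZero n] (η : Fin n → ℕ) :
    cycComp n η = η ∘ ⇑(Equiv.subRight (1 : Fin n)) := rfl

lemma cycComp_mem_SLam (n : ℕ) [NeZero n] (lam ζ : Fin n → ℕ) (h : ζ ∈ SLam n lam) :
    cycComp n ζ ∈ SLam n lam := by
  rw [cycComp_eq_comp]; exact comp_mem_SLam n lam ζ _ h

lemma cycInv_mem_SLam (n : ℕ) [NeZero n] (lam ζ : Fin n → ℕ) (h : ζ ∈ SLam n lam) :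
    cycInv n ζ ∈ SLam n lam := by
  have : cycInv n ζ = ζ ∘ ⇑(Equiv.addRight (1 : Fin n)) := rfl
  rw [this]; exact comp_mem_SLam n lam ζ _ h

lemma cycComp_cycInv (n : ℕ) [NeZero n] (ζ : Fin n → ℕ) : cycComp n (cycInv n ζ) = ζ := by
  funext j; simp [cycComp, cycInv]

lemma cycInv_cycComp (n : ℕ) [NeZero n] (ζ : Fin n → ℕ) : cycInv n (cycComp n ζ) = ζ := by
  funext j; simp [cycComp, cycInv]

section Fib
variable (n : ℕ) (φ : ℕ → ℕ) (lam : Fin n → ℕ)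

def Fib (η : Fin n → ℕ) : Finset (Fin n → ℕ) :=
  (SLam n lam).filter (fun ζ => (fun i => φ (ζ i)) = η)

lemma mem_Fib (η ζ : Fin n → ℕ) :
    ζ ∈ Fib n φ lam η ↔ ζ ∈ SLam n lam ∧ (fun i => φ (ζ i)) = η := Finset.mem_filter

lemma sEta_mem_Fib (i : ℕ) (η ζ : Fin n → ℕ) (h : ζ ∈ Fib n φ lam η) :
    sEta n i ζ ∈ Fib n φ lam (sEta n i η) := by
  rw [mem_Fib] at h ⊢
  refine ⟨sEta_mem_SLam n i lam ζ h.1, ?_⟩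
  funext j
  exact congrFun h.2 (swapPerm n i j)

lemma cycComp_mem_Fib [NeZero n] (η ζ : Fin n → ℕ) (h : ζ ∈ Fib n φ lam η) :
    cycComp n ζ ∈ Fib n φ lam (cycComp n η) := by
  rw [mem_Fib] at h ⊢
  refine ⟨cycComp_mem_SLam n lam ζ h.1, ?_⟩
  funext j
  exact congrFun h.2 (j - 1)

lemma cycInv_mem_Fib [NeZero n] (η ζ : Fin n → ℕ) (h : ζ ∈ Fib n φ lam (cycComp n η)) :
    cycInv n ζ ∈ Fib n φ lam η := by
  rw [mem_Fib] at h ⊢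
  refine ⟨cycInv_mem_SLam n lam ζ h.1, ?_⟩
  funext j
  have := congrFun h.2 (j + 1)
  simpa [cycComp, cycInv] using this

end Fib

lemma sEta_apply_left (n i : ℕ) (h1 : 1 ≤ i) (hin : i < n) (ζ : Fin n → ℕ) :
    sEta n i ζ ⟨i - 1, by omega⟩ = ζ ⟨i, hin⟩ := by
  simp [sEta, swapPerm_left n i h1 hin]

lemma sEta_apply_right (n i : ℕ) (h1 : 1 ≤ i) (hin : i < n) (ζ : Fin n → ℕ) :
    sEta n i ζ ⟨i, hin⟩ = ζ ⟨i - 1, by omega⟩ := by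
  simp [sEta, swapPerm_right n i h1 hin]

lemma sEta_fixed (n i : ℕ) (h1 : 1 ≤ i) (hin : i < n) (η : Fin n → ℕ)
    (heq : η ⟨i - 1, by omega⟩ = η ⟨i, hin⟩) : sEta n i η = η := by
  funext j
  simp only [sEta, Function.comp_apply, swapPerm, dif_pos (And.intro h1 hin)]
  rcases eq_or_ne j ⟨i - 1, by omega⟩ with rfl | hja
  · rw [Equiv.swap_apply_left]; exact heq.symm
  rcases eq_or_ne j ⟨i, hin⟩ with rfl | hjb
  · rw [Equiv.swap_apply_right]; exact heq
  · rw [Equiv.swap_apply_of_ne_of_ne hja hjb]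


/-- Proposition 4.2 of the paper: if `φ` is weakly order-preserving with
`φ(λ) = μ` and `{f_ζ}_{ζ ∈ S_λ}` is a KZ family, then the projected family
`g_η = Σ_{ζ ∈ S_λ : φ(ζ) = η} f_ζ` (a family of homogeneous polynomials of degree
`|λ|`) satisfies the KZ relations indexed by `S_μ`. -/
theorem stmt_12 (n : ℕ) [NeZero n] (φ : ℕ → ℕ) (hφ : Monotone φ)
    (lam mu : Fin n → ℕ)
    (hlam : ∀ i j : Fin n, i ≤ j → lam j ≤ lam i)
    (hmu : ∀ i j : Fin n, i ≤ j → mu j ≤ mu i)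
    (hφlam : (fun i => φ (lam i)) = mu)
    (f : (Fin n → ℕ) → Rt n) (hf : IsKZ n lam f) :
    (∀ η ∈ SLam n mu,
      (∑ ζ ∈ (SLam n lam).filter (fun ζ => (fun i => φ (ζ i)) = η), f ζ).IsHomogeneous
        (∑ i, lam i)) ∧
    KZRel n mu (fun η => ∑ ζ ∈ (SLam n lam).filter (fun ζ => (fun i => φ (ζ i)) = η), f ζ) := by
  obtain ⟨hhom, hrel1, hrel2, hrel3⟩ := hf
  constructor
  · intro η hη
    apply MvPolynomial.IsHomogeneous.sum
    intro ζ hζ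
    exact hhom ζ (Finset.mem_filter.mp hζ).1
  refine ⟨?_, ?_, ?_⟩
  · -- case a : strict inequality
    intro η hη i h1 hin hlt
    show TOp n i (toF n (∑ ζ ∈ Fib n φ lam η, f ζ)) =
      toF n (∑ ζ ∈ Fib n φ lam (sEta n i η), f ζ)
    rw [map_sum, map_sum, TOp_sum]
    have step : ∀ ζ ∈ Fib n φ lam η,
        TOp n i (toF n (f ζ)) = toF n (f (sEta n i ζ)) := by
      intro ζ hζ
      rw [mem_Fib] at hζ
      have hz : ζ ⟨i, hin⟩ < ζ ⟨i - 1, by omega⟩ := by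
        by_contra hcon
        push_neg at hcon
        have hm := hφ hcon
        have e1 := congrFun hζ.2 (⟨i - 1, by omega⟩ : Fin n)
        have e2 := congrFun hζ.2 (⟨i, hin⟩ : Fin n)
        rw [e1, e2] at hm
        omega
      exact hrel1 ζ hζ.1 i h1 hin hz
    rw [Finset.sum_congr rfl step]
    exact Finset.sum_nbij' (fun ζ => sEta n i ζ) (fun ζ => sEta n i ζ)
      (fun ζ hζ => sEta_mem_Fib n φ lam i η ζ hζ)
      (fun ζ hζ => by
        have := sEta_mem_Fib n φ lam i (sEta n i η) ζ hζ
        rwa [sEta_sEta] at this)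
      (fun ζ _ => sEta_sEta n i ζ) (fun ζ _ => sEta_sEta n i ζ)
      (fun ζ _ => rfl)
  · -- case b : equal entries
    intro η hη i h1 hin heq
    show TOp n i (toF n (∑ ζ ∈ Fib n φ lam η, f ζ)) =
      tF n * toF n (∑ ζ ∈ Fib n φ lam η, f ζ)
    classical
    set S := Fib n φ lam η with hS
    set E := S.filter (fun ζ => ζ ⟨i - 1, by omega⟩ = ζ ⟨i, hin⟩) with hE
    set N := S.filter (fun ζ => ¬ ζ ⟨i - 1, by omega⟩ = ζ ⟨i, hin⟩) with hN
    set G := N.filter (fun ζ => ζ ⟨i, hin⟩ < ζ ⟨i - 1, by omega⟩) with hG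
    set G' := N.filter (fun ζ => ¬ ζ ⟨i, hin⟩ < ζ ⟨i - 1, by omega⟩) with hG'
    have hmemS : ∀ ζ ∈ S, sEta n i ζ ∈ S := by
      intro ζ hζ
      have := sEta_mem_Fib n φ lam i η ζ hζ
      rwa [sEta_fixed n i h1 hin η heq] at this
    have ha : ∀ ζ : Fin n → ℕ, sEta n i ζ ⟨i - 1, by omega⟩ = ζ ⟨i, hin⟩ :=
      sEta_apply_left n i h1 hin
    have hb : ∀ ζ : Fin n → ℕ, sEta n i ζ ⟨i, hin⟩ = ζ ⟨i - 1, by omega⟩ :=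
      sEta_apply_right n i h1 hin
    have hGG' : ∀ ζ ∈ G, sEta n i ζ ∈ G' := by
      intro ζ hζ
      simp only [hG, hN, Finset.mem_filter] at hζ
      simp only [hG', hN, Finset.mem_filter, ha ζ, hb ζ]
      exact ⟨⟨hmemS ζ hζ.1.1, by omega⟩, by omega⟩
    have hG'G : ∀ ζ ∈ G', sEta n i ζ ∈ G := by
      intro ζ hζ
      simp only [hG', hN, Finset.mem_filter] at hζ
      simp only [hG, hN, Finset.mem_filter, ha ζ, hb ζ]
      have h1' := hζ.1.2
      have h2' := hζ.2
      exact ⟨⟨hmemS ζ hζ.1.1, by omega⟩, by omega⟩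
    have hbij : ∀ (W : (Fin n → ℕ) → Ft n),
        ∑ ζ ∈ G', W ζ = ∑ ζ ∈ G, W (sEta n i ζ) :=
      fun W => Finset.sum_nbij' (fun ζ => sEta n i ζ) (fun ζ => sEta n i ζ)
        hG'G hGG' (fun ζ _ => sEta_sEta n i ζ) (fun ζ _ => sEta_sEta n i ζ)
        (fun ζ hζ => by rw [sEta_sEta])
    have hsplit : ∀ (W : (Fin n → ℕ) → Ft n),
        ∑ ζ ∈ S, W ζ = ∑ ζ ∈ E, W ζ + (∑ ζ ∈ G, W ζ + ∑ ζ ∈ G', W ζ) := by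
      intro W
      rw [hE, hG, hG', Finset.sum_filter_add_sum_filter_not,
        Finset.sum_filter_add_sum_filter_not]
    have hEeq : ∀ ζ ∈ E, TOp n i (toF n (f ζ)) = tF n * toF n (f ζ) := by
      intro ζ hζ
      simp only [hE, Finset.mem_filter] at hζ
      have hζS := hζ.1; rw [hS, mem_Fib] at hζS
      exact hrel2 ζ hζS.1 i h1 hin hζ.2
    have hGeq : ∀ ζ ∈ G, TOp n i (toF n (f ζ)) = toF n (f (sEta n i ζ)) := by
      intro ζ hζ
      simp only [hG, hN, Finset.mem_filter] at hζ
      have hζS := hζ.1.1; rw [hS, mem_Fib] at hζS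
      exact hrel1 ζ hζS.1 i h1 hin hζ.2
    rw [map_sum, TOp_sum, hsplit (fun ζ => TOp n i (toF n (f ζ))),
      hbij (fun ζ => TOp n i (toF n (f ζ))), ← Finset.sum_add_distrib]
    have hpair : ∀ ζ ∈ G, TOp n i (toF n (f ζ)) + TOp n i (toF n (f (sEta n i ζ))) =
        tF n * toF n (f ζ) + tF n * toF n (f (sEta n i ζ)) := by
      intro ζ hζ
      rw [← TOp_add, TOp_pair n i h1 hin _ _ (hGeq ζ hζ)]
      ring
    rw [Finset.sum_congr rfl hpair, Finset.sum_congr rfl hEeq, Finset.sum_add_distrib,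
      ← hbij (fun ζ => tF n * toF n (f ζ)), Finset.mul_sum,
      hsplit (fun ζ => tF n * toF n (f ζ))]
  · -- case c : cyclic
    intro η hη
    show (∑ ζ ∈ Fib n φ lam η, f ζ) =
      rename (fun j : Fin n => j - 1) (∑ ζ ∈ Fib n φ lam (cycComp n η), f ζ)
    rw [map_sum]
    have step : ∀ ζ ∈ Fib n φ lam η,
        f ζ = rename (fun j : Fin n => j - 1) (f (cycComp n ζ)) := by
      intro ζ hζ
      rw [mem_Fib] at hζ
      exact hrel3 ζ hζ.1
    rw [Finset.sum_congr rfl step]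
    exact Finset.sum_nbij' (fun ζ => cycComp n ζ) (fun ζ => cycInv n ζ)
      (fun ζ hζ => cycComp_mem_Fib n φ lam η ζ hζ)
      (fun ζ hζ => cycInv_mem_Fib n φ lam η ζ hζ)
      (fun ζ _ => cycInv_cycComp n ζ) (fun ζ _ => cycComp_cycInv n ζ)
      (fun ζ _ => rfl)


end
end
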